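/- Let X_1, X_2, ... be independent, identically distributed, non-degenerate real random variables with mean 0, and let S_n = X_1 + ... + X_n. Then almost surely S_n > 0 for infinitely many n and S_n < 0 for infinitely many n. -/

import Mathlib

open MeasureTheory ProbabilityTheory Filter
open scoped Topology ENNReal NNReal

set_option linter.unusedSectionVars false

namespace StmtAux

/-- partial sum of the first `k` coordinates -/
noncomputable def psum (n : ℕ) (x : Fin n → ℝ) (k : ℕ) : ℝ :=
  ∑ i ∈ Finset.univ.filter (fun i : Fin n => (i : ℕ) < k), x i

lemma psum_measurable (n k : ℕ) : Measurable (fun x : Fin n → ℝ => psum n x k) :=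
  Finset.measurable_sum _ fun i _ => measurable_pi_apply i

lemma psum_eq {n k : ℕ} (hk : k ≤ n) (x : Fin n → ℝ) (f : ℕ → ℝ)
    (hxf : ∀ i : Fin n, x i = f ↑i) : psum n x k = ∑ i ∈ Finset.range k, f i := by
  rw [psum]
  rw [Finset.sum_congr rfl (fun i _ => hxf i), Finset.sum_filter]
  rw [Fin.sum_univ_eq_sum_range (fun j => if j < k then f j else 0)]
  rw [← Finset.sum_subset (Finset.range_subset_range.2 hk)
    (fun j _ hj => if_neg (fun h => hj (Finset.mem_range.2 h)))]
  exact Finset.sum_congr rfl fun j hj => if_pos (Finset.mem_range.1 hj)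

def negSet (n : ℕ) : Set (Fin n → ℝ) := {x | ∀ k, 1 ≤ k → k ≤ n → psum n x k < 0}
def nonnegSet (n : ℕ) : Set (Fin n → ℝ) := {x | ∀ k, 1 ≤ k → k ≤ n → 0 ≤ psum n x k}
def maxSet (n : ℕ) : Set (Fin n → ℝ) := {x | ∀ j, j < n → psum n x j ≤ psum n x n}

lemma negSet_measurableSet (n : ℕ) : MeasurableSet (negSet n) := by
  have : negSet n = ⋂ k, ⋂ (_ : 1 ≤ k), ⋂ (_ : k ≤ n), {x | psum n x k < 0} := by
    ext x; simp [negSet]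
  rw [this]
  exact MeasurableSet.iInter fun k => MeasurableSet.iInter fun _ => MeasurableSet.iInter fun _ =>
    measurableSet_lt (psum_measurable n k) measurable_const

lemma nonnegSet_measurableSet (n : ℕ) : MeasurableSet (nonnegSet n) := by
  have : nonnegSet n = ⋂ k, ⋂ (_ : 1 ≤ k), ⋂ (_ : k ≤ n), {x | 0 ≤ psum n x k} := by
    ext x; simp [nonnegSet]
  rw [this]
  exact MeasurableSet.iInter fun k => MeasurableSet.iInter fun _ => MeasurableSet.iInter fun _ =>
    measurableSet_le measurable_const (psum_measurable n k)

lemma maxSet_measurableSet (n : ℕ) : MeasurableSet (maxSet n) := by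
  have : maxSet n = ⋂ j, ⋂ (_ : j < n), {x | psum n x j ≤ psum n x n} := by
    ext x; simp [maxSet]
  rw [this]
  exact MeasurableSet.iInter fun j => MeasurableSet.iInter fun _ =>
    measurableSet_le (psum_measurable n j) (psum_measurable n n)

/-- sum of the last `k` coordinates -/
noncomputable def tsumLast (n k : ℕ) (x : Fin n → ℝ) : ℝ :=
  ∑ j ∈ Finset.univ.filter (fun j : Fin n => n - k ≤ (j : ℕ)), x j

lemma psum_rev (n k : ℕ) (x : Fin n → ℝ) :
    psum n (fun i => x (Fin.rev i)) k = tsumLast n k x := by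
  rw [psum, tsumLast]
  refine Finset.sum_bij' (fun i _ => Fin.rev i) (fun j _ => Fin.rev j) ?_ ?_ ?_ ?_ ?_
  · intro i hi
    simp only [Finset.mem_filter, Finset.mem_univ, true_and] at hi ⊢
    rw [Fin.val_rev]
    have := i.isLt
    omega
  · intro j hj
    simp only [Finset.mem_filter, Finset.mem_univ, true_and] at hj ⊢
    rw [Fin.val_rev]
    have := j.isLt
    omega
  · intro i _; exact Fin.rev_rev i
  · intro j _; exact Fin.rev_rev j
  · intro i _; rfl

lemma maxSet_mem_iff (n : ℕ) (x : Fin n → ℝ) :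
    x ∈ maxSet n ↔ ∀ k, 1 ≤ k → k ≤ n → 0 ≤ tsumLast n k x := by
  have key : ∀ j, j < n → psum n x n - psum n x j = tsumLast n (n - j) x := by
    intro j hj
    rw [psum, psum, tsumLast]
    have hsub : Finset.univ.filter (fun i : Fin n => (i : ℕ) < j)
        ⊆ Finset.univ.filter (fun i : Fin n => (i : ℕ) < n) := by
      intro i hi
      simp only [Finset.mem_filter, Finset.mem_univ, true_and] at hi ⊢
      exact i.isLt
    rw [← Finset.sum_sdiff_eq_sub hsub]
    refine Finset.sum_congr ?_ (fun _ _ => rfl)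
    ext i
    simp only [Finset.mem_sdiff, Finset.mem_filter, Finset.mem_univ, true_and]
    have := i.isLt
    omega
  constructor
  · intro h k hk1 hkn
    have hj : n - k < n := by omega
    have := h (n - k) hj
    have h2 := key (n - k) hj
    have : n - (n - k) = k := by omega
    rw [this] at h2
    linarith [key (n - k) hj, h (n - k) hj]
  · intro h j hj
    have h2 := key j hj
    have h3 := h (n - j) (by omega) (by omega)
    linarith
variable {Ω : Type*} [MeasurableSpace Ω] {P : Measure Ω} [IsProbabilityMeasure P]
variable {X : ℕ → Ω → ℝ}

lemma iIndepFun_precomp (h : iIndepFun X P)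
    {ι' : Type*} {g : ι' → ℕ} (hg : Function.Injective g) :
    iIndepFun (fun i => X (g i)) P := by
  classical
  rw [iIndepFun_iff_measure_inter_preimage_eq_mul] at h ⊢
  intro S sets hsets
  set sets' : ℕ → Set ℝ := fun j => ⋂ i ∈ S.filter (fun i => g i = j), sets i with hsets'
  have hfilter : ∀ i ∈ S, S.filter (fun i' => g i' = g i) = {i} := by
    intro i hi
    ext i'
    simp only [Finset.mem_filter, Finset.mem_singleton]
    exact ⟨fun ⟨_, h2⟩ => hg h2, fun h => by subst h; exact ⟨hi, rfl⟩⟩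
  have key : ∀ i ∈ S, sets' (g i) = sets i := by
    intro i hi
    show (⋂ i' ∈ S.filter (fun i' => g i' = g i), sets i') = sets i
    rw [hfilter i hi]
    simp
  have hmeas' : ∀ j ∈ S.image g, MeasurableSet (sets' j) := by
    intro j hj
    exact Finset.measurableSet_biInter _ fun i hi => hsets i (Finset.mem_filter.1 hi).1
  have hinter : (⋂ i ∈ S, (fun i => X (g i)) i ⁻¹' sets i)
      = ⋂ j ∈ S.image g, X j ⁻¹' sets' j := by
    ext ω
    simp only [Set.mem_iInter, Set.mem_preimage, Finset.mem_image]
    constructor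
    · rintro hω j ⟨i, hi, rfl⟩
      rw [key i hi]
      exact hω i hi
    · intro hω i hi
      have := hω (g i) ⟨i, hi, rfl⟩
      rwa [key i hi] at this
  rw [hinter, h (S.image g) hmeas']
  rw [Finset.prod_image (fun i hi i' hi' hh => hg hh)]
  exact Finset.prod_congr rfl fun i hi => by rw [key i hi]

lemma map_vec_eq_pi (hmeas : ∀ n, Measurable (X n))
    (hindep : iIndepFun X P)
    (hident : ∀ n, IdentDistrib (X n) (X 0) P P)
    {n : ℕ} {g : Fin n → ℕ} (hg : Function.Injective g) :
    P.map (fun ω (i : Fin n) => X (g i) ω) = Measure.pi (fun _ => P.map (X 0)) := by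
  haveI : IsProbabilityMeasure (P.map (X 0)) :=
    Measure.isProbabilityMeasure_map (hmeas 0).aemeasurable
  refine (Measure.pi_eq fun s hs => ?_).symm
  have hvec : Measurable (fun ω (i : Fin n) => X (g i) ω) :=
    measurable_pi_lambda _ fun i => hmeas (g i)
  rw [Measure.map_apply hvec (MeasurableSet.univ_pi hs)]
  have hpre : (fun ω (i : Fin n) => X (g i) ω) ⁻¹' Set.pi Set.univ s
      = ⋂ i, X (g i) ⁻¹' s i := by
    ext ω; simp [Set.mem_pi]
  rw [hpre]
  have := (iIndepFun_precomp hindep hg).meas_iInter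
    (s := fun i => X (g i) ⁻¹' s i) (fun i => ⟨s i, hs i, rfl⟩)
  rw [this]
  exact Finset.prod_congr rfl fun i _ => by
    rw [← Measure.map_apply (hmeas (g i)) (hs i), (hident (g i)).map_eq]

lemma pi_rev (ν : Measure ℝ) [IsProbabilityMeasure ν] (n : ℕ) :
    Measure.pi (fun _ : Fin n => ν) (maxSet n) = Measure.pi (fun _ : Fin n => ν) (nonnegSet n) := by
  have hmp := measurePreserving_piCongrLeft (fun _ : Fin n => ν) (Fin.revPerm (n := n))
  set e := MeasurableEquiv.piCongrLeft (fun _ : Fin n => ℝ) (Fin.revPerm (n := n)) with he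
  have hcoe : ∀ x : Fin n → ℝ, e x = fun j => x (Fin.rev j) := by
    intro x
    funext j
    have h1 : e x (Fin.revPerm (Fin.rev j)) = x (Fin.rev j) :=
      MeasurableEquiv.piCongrLeft_apply_apply _ _ _
    simpa [Fin.rev_rev] using h1
  have hpre : maxSet n = e ⁻¹' (nonnegSet n) := by
    ext x
    rw [Set.mem_preimage, maxSet_mem_iff]
    show _ ↔ ∀ k, 1 ≤ k → k ≤ n → 0 ≤ psum n (e x) k
    rw [hcoe x]
    constructor
    · intro h k h1 h2; rw [psum_rev]; exact h k h1 h2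
    · intro h k h1 h2; rw [← psum_rev n k x]; exact h k h1 h2
  rw [hpre, hmp.measure_preimage (nonnegSet_measurableSet n).nullMeasurableSet]

variable (X) in
def vecEvent (m n : ℕ) (B : Set (Fin n → ℝ)) : Set Ω :=
  (fun ω (i : Fin n) => X (m + (i : ℕ)) ω) ⁻¹' B

lemma vecEvent_prob (hmeas : ∀ n, Measurable (X n))
    (hindep : iIndepFun X P)
    (hident : ∀ n, IdentDistrib (X n) (X 0) P P)
    (m n : ℕ) {B : Set (Fin n → ℝ)} (hB : MeasurableSet B) :
    P (vecEvent X m n B) = Measure.pi (fun _ : Fin n => P.map (X 0)) B := by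
  have hg : Function.Injective (fun i : Fin n => m + (i : ℕ)) := by
    intro a b h
    have h' : m + (a : ℕ) = m + (b : ℕ) := h
    exact Fin.val_injective (by omega)
  rw [vecEvent, ← Measure.map_apply (measurable_pi_lambda _ fun i => hmeas _) hB,
    map_vec_eq_pi hmeas hindep hident hg]

lemma vecEvent_measurableSet (hmeas : ∀ n, Measurable (X n)) {s : Set ℕ}
    (m n : ℕ) (hs : ∀ i : Fin n, m + (i : ℕ) ∈ s) {B : Set (Fin n → ℝ)} (hB : MeasurableSet B) :
    MeasurableSet[⨆ i ∈ s, MeasurableSpace.comap (X i) inferInstance] (vecEvent X m n B) := by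
  have hcoord : ∀ i : Fin n,
      @Measurable Ω ℝ (⨆ i ∈ s, MeasurableSpace.comap (X i) inferInstance) _ (X (m + (i : ℕ))) :=
    fun i => Measurable.of_comap_le
      (le_biSup (f := fun j => MeasurableSpace.comap (X j) inferInstance) (hs i))
  exact (@measurable_pi_lambda Ω (Fin n) (fun _ => ℝ)
    (⨆ i ∈ s, MeasurableSpace.comap (X i) inferInstance) _ _ hcoord) hB

lemma indep_prod (hmeas : ∀ n, Measurable (X n))
    (hindep : iIndepFun X P)
    {s t : Set ℕ} (hst : Disjoint s t) {E F : Set Ω}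
    (hE : MeasurableSet[⨆ i ∈ s, MeasurableSpace.comap (X i) inferInstance] E)
    (hF : MeasurableSet[⨆ i ∈ t, MeasurableSpace.comap (X i) inferInstance] F) :
    P (E ∩ F) = P E * P F := by
  have h := indep_iSup_of_disjoint (fun i => (hmeas i).comap_le) hindep.iIndep hst
  exact (Indep_iff _ _ _).1 h E F hE hF

theorem stays_neg_zero (hmeas : ∀ n, Measurable (X n))
    (hindep : iIndepFun X P)
    (hident : ∀ n, IdentDistrib (X n) (X 0) P P)
    (hint : Integrable (X 0) P) (hmean : ∫ θ, X 0 θ ∂P = 0) :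
    P {ω | ∀ k, 1 ≤ k → ∑ i ∈ Finset.range k, X i ω < 0} = 0 := by
  classical
  haveI : IsProbabilityMeasure (P.map (X 0)) := Measure.isProbabilityMeasure_map (hmeas 0).aemeasurable
  by_contra hρ
  set D : ℕ → Set Ω := fun n => vecEvent X 0 n (nonnegSet n) with hDdef
  set A : ℕ → Set Ω := fun n => vecEvent X 0 n (maxSet n) with hAdef
  set GK : ℕ → ℕ → Set Ω := fun m K => vecEvent X m K (negSet K) with hGKdef
  set G : ℕ → Set Ω := fun m => {ω | ∀ k, 1 ≤ k → ∑ i ∈ Finset.range k, X (m + i) ω < 0}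
    with hGdef
  have hmeasVec : ∀ (m n : ℕ) (B : Set (Fin n → ℝ)), MeasurableSet B →
      MeasurableSet (vecEvent X m n B) := fun m n B hB =>
    (measurable_pi_lambda _ fun i => hmeas _) hB
  have hmeasD : ∀ n, MeasurableSet (D n) := fun n => hmeasVec _ _ _ (nonnegSet_measurableSet n)
  have hmeasA : ∀ n, MeasurableSet (A n) := fun n => hmeasVec _ _ _ (maxSet_measurableSet n)
  have hmeasGK : ∀ m K, MeasurableSet (GK m K) := fun m K =>
    hmeasVec _ _ _ (negSet_measurableSet K)
  have hDmem : ∀ (n : ℕ) (ω : Ω),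
      ω ∈ D n ↔ ∀ k, 1 ≤ k → k ≤ n → 0 ≤ ∑ i ∈ Finset.range k, X i ω := by
    intro n ω
    change (fun i : Fin n => X (0 + (i : ℕ)) ω) ∈ nonnegSet n ↔ _
    rw [nonnegSet, Set.mem_setOf_eq]
    refine forall_congr' fun k => imp_congr_right fun h1 => imp_congr_right fun h2 => ?_
    rw [psum_eq h2 _ (fun j => X j ω) (fun i => by simp)]
  have hAmem : ∀ (n : ℕ) (ω : Ω),
      ω ∈ A n ↔ ∀ j, j < n →
        ∑ i ∈ Finset.range j, X i ω ≤ ∑ i ∈ Finset.range n, X i ω := by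
    intro n ω
    change (fun i : Fin n => X (0 + (i : ℕ)) ω) ∈ maxSet n ↔ _
    rw [maxSet, Set.mem_setOf_eq]
    refine forall_congr' fun j => imp_congr_right fun hj => ?_
    rw [psum_eq hj.le _ (fun j => X j ω) (fun i => by simp),
      psum_eq le_rfl _ (fun j => X j ω) (fun i => by simp)]
  have hGKmem : ∀ (m K : ℕ) (ω : Ω),
      ω ∈ GK m K ↔ ∀ k, 1 ≤ k → k ≤ K → ∑ i ∈ Finset.range k, X (m + i) ω < 0 := by
    intro m K ω
    change (fun i : Fin K => X (m + (i : ℕ)) ω) ∈ negSet K ↔ _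
    rw [negSet, Set.mem_setOf_eq]
    refine forall_congr' fun k => imp_congr_right fun h1 => imp_congr_right fun h2 => ?_
    rw [psum_eq h2 _ (fun j => X (m + j) ω) (fun i => by simp)]
  have hGiInt : ∀ m, G m = ⋂ K, GK m K := by
    intro m
    ext ω
    rw [Set.mem_iInter, hGdef, Set.mem_setOf_eq]
    constructor
    · intro h K
      rw [hGKmem]
      intro k h1 _
      exact h k h1
    · intro h k h1
      exact (hGKmem m k ω).1 (h k) k h1 le_rfl
  have hmeasG : ∀ m, MeasurableSet (G m) := by
    intro m
    rw [hGiInt m]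
    exact MeasurableSet.iInter fun K => hmeasGK m K
  have hGKanti : ∀ m, Antitone (GK m) := by
    intro m K1 K2 h ω hω
    rw [hGKmem] at hω ⊢
    exact fun k h1 h2 => hω k h1 (h2.trans h)
  -- shift invariance
  have hPGK : ∀ m K, P (GK m K) = P (GK 0 K) := by
    intro m K
    rw [hGKdef]
    rw [vecEvent_prob hmeas hindep hident m K (negSet_measurableSet K),
      vecEvent_prob hmeas hindep hident 0 K (negSet_measurableSet K)]
  have htend : ∀ m, Tendsto (fun K => P (GK m K)) atTop (𝓝 (P (G m))) := by
    intro m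
    rw [hGiInt m]
    exact tendsto_measure_iInter_atTop (fun K => (hmeasGK m K).nullMeasurableSet)
      (fun K1 K2 h => hGKanti m h) ⟨0, measure_ne_top P _⟩
  have hPGm : ∀ m, P (G m) = P (G 0) := by
    intro m
    refine tendsto_nhds_unique (htend m) ?_
    exact (htend 0).congr fun K => (hPGK m K).symm
  -- duality
  have hDA : ∀ n, P (D n) = P (A n) := by
    intro n
    rw [hDdef, hAdef, vecEvent_prob hmeas hindep hident 0 n (nonnegSet_measurableSet n),
      vecEvent_prob hmeas hindep hident 0 n (maxSet_measurableSet n), pi_rev]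
  -- product formula
  have hprod : ∀ n, P (A n ∩ G n) = P (A n) * P (G 0) := by
    intro n
    have h1 : ∀ K, P (A n ∩ GK n K) = P (A n) * P (GK n K) := by
      intro K
      refine indep_prod hmeas hindep (s := {i | i < n}) (t := {i | n ≤ i}) ?_ ?_ ?_
      · refine Set.disjoint_left.mpr fun i h1 h2 => ?_
        simp only [Set.mem_setOf_eq] at h1 h2
        omega
      · exact vecEvent_measurableSet hmeas 0 n (fun i => by simpa using i.isLt)
          (maxSet_measurableSet n)
      · exact vecEvent_measurableSet hmeas n K (fun i => by simp)
          (negSet_measurableSet K)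
    have h2 : Tendsto (fun K => P (A n ∩ GK n K)) atTop (𝓝 (P (A n ∩ G n))) := by
      have heq : A n ∩ G n = ⋂ K, (A n ∩ GK n K) := by
        rw [hGiInt n, Set.inter_iInter]
      rw [heq]
      exact tendsto_measure_iInter_atTop
        (fun K => ((hmeasA n).inter (hmeasGK n K)).nullMeasurableSet)
        (fun K1 K2 h => Set.inter_subset_inter_right _ (hGKanti n h))
        ⟨0, measure_ne_top P _⟩
    have h3 : Tendsto (fun K => P (A n ∩ GK n K)) atTop (𝓝 (P (A n) * P (G n))) := by
      refine (ENNReal.Tendsto.const_mul (htend n) (Or.inr (measure_ne_top P _))).congr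
        fun K => (h1 K).symm
    have := tendsto_nhds_unique h2 h3
    rw [this, hPGm n]
  -- disjointness
  set C : ℕ → Set Ω := fun n => A n ∩ G n with hCdef
  have hdisjlt : ∀ a b, a < b → Disjoint (C a) (C b) := by
    intro a b hab
    refine Set.disjoint_left.mpr fun ω hCa hCb => ?_
    have h1 : ∑ i ∈ Finset.range (b - a), X (a + i) ω < 0 :=
      hCa.2 (b - a) (by omega)
    have h2 : ∑ i ∈ Finset.range a, X i ω ≤ ∑ i ∈ Finset.range b, X i ω :=
      (hAmem b ω).1 hCb.1 a hab
    have hsplit := Finset.sum_range_add (fun i => X i ω) a (b - a)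
    rw [show a + (b - a) = b from by omega] at hsplit
    rw [hsplit] at h2
    linarith
  have hdisj : Pairwise (Function.onFun Disjoint C) := by
    intro a b hab
    rcases hab.lt_or_gt with h | h
    · exact hdisjlt a b h
    · exact (hdisjlt b a h).symm
  have hsum1 : ∑' n, P (C n) ≤ 1 := by
    rw [← measure_iUnion hdisj fun n => (hmeasA n).inter (hmeasG n)]
    exact prob_le_one
  have hG0 : G 0 = {ω | ∀ k, 1 ≤ k → ∑ i ∈ Finset.range k, X i ω < 0} := by
    rw [hGdef]
    ext ω
    simp
  have hρ0 : P (G 0) ≠ 0 := by rw [hG0]; exact hρ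
  have hAsum : ∑' n, P (A n) ≠ ⊤ := by
    intro h
    have : ∑' n, P (C n) = ⊤ := by
      have : ∀ n, P (C n) = P (A n) * P (G 0) := hprod
      rw [tsum_congr this, ENNReal.tsum_mul_right, h, ENNReal.top_mul hρ0]
    rw [this] at hsum1
    simp at hsum1
  have hDsum : ∑' n, P (D n) ≠ ⊤ := by
    rw [tsum_congr hDA]; exact hAsum
  -- Wald part
  have hDanti : Antitone D := by
    intro n1 n2 h ω hω
    rw [hDmem] at hω ⊢
    exact fun k h1 h2 => hω k h1 (h2.trans h)
  have hD0 : D 0 = Set.univ := by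
    rw [Set.eq_univ_iff_forall]
    intro ω
    rw [hDmem]
    intro k h1 h2
    omega
  have hPDto0 : Tendsto (fun n => P (D n)) atTop (𝓝 0) :=
    ENNReal.tendsto_atTop_zero_of_tsum_ne_top hDsum
  have hae : ∀ᵐ ω ∂P, ∃ n, ω ∉ D n := by
    rw [ae_iff]
    have heq : {ω | ¬ ∃ n, ω ∉ D n} = ⋂ n, D n := by
      ext ω
      simp [not_exists, not_not, Set.mem_iInter]
    rw [heq]
    refine le_antisymm ?_ zero_le
    exact ge_of_tendsto' hPDto0 fun n => measure_mono (Set.iInter_subset _ n)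
  set N : Ω → ℕ := fun ω => if h : ∃ n, ω ∉ D n then Nat.find h else 0 with hNdef
  set Z : Ω → ℝ := fun ω => ∑ i ∈ Finset.range (N ω), X i ω with hZdef
  set f : ℕ → Ω → ℝ := fun i => (D i).indicator (X i) with hfdef
  have hNkey : ∀ ω (h : ∃ n, ω ∉ D n) (i : ℕ), ω ∈ D i ↔ i < N ω := by
    intro ω h i
    rw [hNdef]
    simp only [dif_pos h]
    constructor
    · intro hi
      by_contra hni
      push_neg at hni
      exact (Nat.find_spec h) (hDanti hni hi)
    · intro hi
      have := Nat.find_min h hi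
      rwa [not_not] at this
  have hNpos : ∀ ω (h : ∃ n, ω ∉ D n), 1 ≤ N ω := by
    intro ω h
    by_contra hn
    have h0 : N ω = 0 := by omega
    have : ω ∈ D 0 := by rw [hD0]; trivial
    rw [hNkey ω h 0, h0] at this
    omega
  have hZneg : ∀ᵐ ω ∂P, Z ω < 0 := by
    filter_upwards [hae] with ω h
    have hN1 := hNpos ω h
    have hnotD : ω ∉ D (N ω) := by
      rw [hNkey ω h]
      omega
    have hDprev : ω ∈ D (N ω - 1) := by
      rw [hNkey ω h]
      omega
    rw [hDmem] at hnotD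
    push_neg at hnotD
    obtain ⟨k, hk1, hk2, hk3⟩ := hnotD
    have hkN : k = N ω := by
      by_contra hne
      have : k ≤ N ω - 1 := by omega
      have := (hDmem _ ω).1 hDprev k hk1 this
      linarith
    show (∑ i ∈ Finset.range (N ω), X i ω) < 0
    rwa [← hkN]
  have hZeq : ∀ᵐ ω ∂P, Z ω = ∑' i, f i ω := by
    filter_upwards [hae] with ω h
    rw [hZdef]
    have := tsum_eq_sum (L := SummationFilter.unconditional ℕ) (f := fun i => f i ω) (s := Finset.range (N ω)) ?_
    · rw [this]
      refine Finset.sum_congr rfl fun i hi => ?_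
      rw [hfdef]
      exact (Set.indicator_of_mem ((hNkey ω h i).2 (Finset.mem_range.1 hi)) _).symm
    · intro i hi
      rw [hfdef]
      refine Set.indicator_of_notMem ?_ _
      rw [hNkey ω h i]
      exact fun hc => hi (Finset.mem_range.2 hc)
  have hXiint : ∀ i, Integrable (X i) P := fun i => (hident i).integrable_iff.2 hint
  have hfint : ∀ i, Integrable (f i) P := fun i => (hXiint i).indicator (hmeasD i)
  -- independence of X i from D i
  set Ind : ℕ → Ω → ℝ := fun i => (D i).indicator (fun _ => (1 : ℝ)) with hInddef
  have hDMlt : ∀ i, MeasurableSet[⨆ j ∈ {j | j < i}, MeasurableSpace.comap (X j)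
      inferInstance] (D i) := by
    intro i
    exact vecEvent_measurableSet hmeas 0 i (fun j => by simpa using j.isLt)
      (nonnegSet_measurableSet i)
  have hIndMlt : ∀ i, @Measurable Ω ℝ
      (⨆ j ∈ {j | j < i}, MeasurableSpace.comap (X j) inferInstance) _ (Ind i) := by
    intro i
    exact measurable_const.indicator (hDMlt i)
  have hIndepf : ∀ i, IndepFun (X i) (Ind i) P := by
    intro i
    have hdisj2 : Disjoint ({i} : Set ℕ) {j | j < i} := by
      refine Set.disjoint_left.mpr fun j h1 h2 => ?_
      simp only [Set.mem_singleton_iff] at h1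
      simp only [Set.mem_setOf_eq] at h2
      omega
    have h := indep_iSup_of_disjoint (fun j => (hmeas j).comap_le) hindep.iIndep hdisj2
    have h' := indep_of_indep_of_le_left h
      (le_biSup (f := fun j => MeasurableSpace.comap (X j) inferInstance)
        (Set.mem_singleton i))
    rw [indepFun_iff_measure_inter_preimage_eq_mul]
    intro s t hs ht
    exact (Indep_iff _ _ _).1 h' _ _ ⟨s, hs, rfl⟩ (hIndMlt i ht)
  have hfmul : ∀ i, f i = X i * Ind i := by
    intro i
    funext ω
    show (D i).indicator (X i) ω = X i ω * Ind i ω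
    by_cases hω : ω ∈ D i <;>
      simp [hInddef, Set.indicator_of_mem, Set.indicator_of_notMem, hω]
  have hintzero : ∀ i, ∫ ω, f i ω ∂P = 0 := by
    intro i
    rw [hfmul i]
    rw [(hIndepf i).integral_mul_eq_mul_integral (hXiint i).aestronglyMeasurable
      ((integrable_const (1:ℝ)).indicator (hmeasD i)).aestronglyMeasurable]
    have : ∫ ω, X i ω ∂P = 0 := by
      rw [(hident i).integral_eq]
      exact hmean
    rw [this, zero_mul]
  have habs : ∀ i, ∫ ω, ‖f i ω‖ ∂P = (∫ ω, ‖X 0 ω‖ ∂P) * (P (D i)).toReal := by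
    intro i
    have h1 : (fun ω => ‖f i ω‖) = (fun ω => ‖X i ω‖) * Ind i := by
      funext ω
      show ‖(D i).indicator (X i) ω‖ = ‖X i ω‖ * Ind i ω
      by_cases hω : ω ∈ D i <;>
        simp [hInddef, Set.indicator_of_mem, Set.indicator_of_notMem, hω]
    rw [h1]
    have h2 : IndepFun (fun ω => ‖X i ω‖) (Ind i) P :=
      (hIndepf i).comp measurable_norm measurable_id
    rw [h2.integral_mul_eq_mul_integral ((hXiint i).norm.aestronglyMeasurable)
      ((integrable_const (1:ℝ)).indicator (hmeasD i)).aestronglyMeasurable]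
    have h3 : ∫ ω, ‖X i ω‖ ∂P = ∫ ω, ‖X 0 ω‖ ∂P :=
      ((hident i).comp measurable_norm).integral_eq
    have h4 : ∫ ω, Ind i ω ∂P = (P (D i)).toReal := by
      rw [hInddef]
      exact integral_indicator_one (hmeasD i)
    rw [h3, h4]
  have hlint : ∑' i, ∫⁻ ω, ‖f i ω‖₊ ∂P ≠ ⊤ := by
    have heach : ∀ i, ∫⁻ ω, ‖f i ω‖₊ ∂P
        = ENNReal.ofReal (∫ ω, ‖X 0 ω‖ ∂P) * P (D i) := by
      intro i
      simp_rw [← enorm_eq_nnnorm]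
      rw [← ofReal_integral_norm_eq_lintegral_enorm (hfint i), habs i,
        ENNReal.ofReal_mul (integral_nonneg fun ω => norm_nonneg _),
        ENNReal.ofReal_toReal (measure_ne_top P _)]
    rw [tsum_congr heach, ENNReal.tsum_mul_left]
    exact ENNReal.mul_ne_top ENNReal.ofReal_ne_top hDsum
  have htsum_int : ∫ ω, (∑' i, f i ω) ∂P = 0 := by
    rw [integral_tsum (fun i => (hfint i).aestronglyMeasurable) hlint]
    rw [tsum_congr hintzero]
    exact tsum_zero
  -- Z integrable
  set g : ℕ → Ω → ℝ := fun n ω => ∑ i ∈ Finset.range n, f i ω with hgdef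
  have hgmeas : ∀ n, Measurable (g n) := fun n =>
    Finset.measurable_sum _ fun i _ => (hmeas i).indicator (hmeasD i)
  have hglim : ∀ᵐ ω ∂P, Tendsto (fun n => g n ω) atTop (𝓝 (Z ω)) := by
    filter_upwards [hae] with ω h
    have hconst : ∀ n, N ω ≤ n → g n ω = Z ω := by
      intro n hn
      show (∑ i ∈ Finset.range n, f i ω) = ∑ i ∈ Finset.range (N ω), X i ω
      rw [← Finset.sum_subset (Finset.range_subset_range.2 hn)]
      · refine Finset.sum_congr rfl fun i hi => ?_
        exact Set.indicator_of_mem ((hNkey ω h i).2 (Finset.mem_range.1 hi)) _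
      · intro i _ hi
        refine Set.indicator_of_notMem ?_ _
        rw [hNkey ω h i]
        exact fun hc => hi (Finset.mem_range.2 hc)
    refine Tendsto.congr' ?_ tendsto_const_nhds
    filter_upwards [eventually_ge_atTop (N ω)] with n hn
    exact (hconst n hn).symm
  have hZaesm : AEStronglyMeasurable Z P :=
    (aemeasurable_of_tendsto_metrizable_ae atTop
      (fun n => (hgmeas n).aemeasurable) hglim).aestronglyMeasurable
  have hZint : Integrable Z P := by
    refine ⟨hZaesm, ?_⟩
    show (∫⁻ ω, (‖Z ω‖₊ : ℝ≥0∞) ∂P) < ⊤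
    calc ∫⁻ ω, (‖Z ω‖₊ : ℝ≥0∞) ∂P ≤ ∫⁻ ω, (∑' i, (‖f i ω‖₊ : ℝ≥0∞)) ∂P := by
          refine lintegral_mono_ae ?_
          filter_upwards [hae] with ω h
          calc (‖Z ω‖₊ : ℝ≥0∞) = ‖∑ i ∈ Finset.range (N ω), X i ω‖₊ := rfl
            _ ≤ ∑ i ∈ Finset.range (N ω), (‖X i ω‖₊ : ℝ≥0∞) := by
                exact_mod_cast nnnorm_sum_le _ _
            _ = ∑ i ∈ Finset.range (N ω), (‖f i ω‖₊ : ℝ≥0∞) := by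
                refine Finset.sum_congr rfl fun i hi => ?_
                show (‖X i ω‖₊ : ℝ≥0∞) = ‖(D i).indicator (X i) ω‖₊
                rw [Set.indicator_of_mem ((hNkey ω h i).2 (Finset.mem_range.1 hi))]
            _ ≤ ∑' i, (‖f i ω‖₊ : ℝ≥0∞) := ENNReal.sum_le_tsum _
      _ = ∑' i, ∫⁻ ω, ‖f i ω‖₊ ∂P :=
          lintegral_tsum fun i => ((hmeas i).indicator (hmeasD i)).nnnorm.coe_nnreal_ennreal.aemeasurable
      _ < ⊤ := hlint.lt_top
  have hZzero : ∫ ω, Z ω ∂P = 0 := by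
    rw [integral_congr_ae hZeq]
    exact htsum_int
  -- contradiction
  have hnegint : ∫ ω, -Z ω ∂P = 0 := by
    rw [integral_neg, hZzero, neg_zero]
  have hnonneg : 0 ≤ᵐ[P] fun ω => -Z ω := by
    filter_upwards [hZneg] with ω h
    simp only [Pi.zero_apply]
    linarith
  have heq0 := (integral_eq_zero_iff_of_nonneg_ae hnonneg hZint.neg).1 hnegint
  obtain ⟨ω, h1, h2⟩ := (hZneg.and heq0).exists
  have : -Z ω = 0 := h2
  linarith

theorem nonneg_infinite (hmeas : ∀ n, Measurable (X n))
    (hindep : iIndepFun X P)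
    (hident : ∀ n, IdentDistrib (X n) (X 0) P P)
    (hint : Integrable (X 0) P) (hmean : ∫ θ, X 0 θ ∂P = 0) :
    ∀ᵐ ω ∂P, {n : ℕ | 0 ≤ ∑ i ∈ Finset.range n, X i ω}.Infinite := by
  have hm : ∀ m : ℕ, P {ω | ∀ k, 1 ≤ k → ∑ i ∈ Finset.range k, X (m + i) ω < 0} = 0 := by
    intro m
    have hinj : Function.Injective (fun j : ℕ => m + j) := fun a b h => by
      have h' : m + a = m + b := h
      omega
    have := stays_neg_zero (X := fun j => X (m + j)) (fun n => hmeas (m + n))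
      (iIndepFun_precomp hindep hinj)
      (fun n => (hident (m + n)).trans (hident (m + 0)).symm)
      ((hident (m + 0)).integrable_iff.2 hint) ((hident (m + 0)).integral_eq.trans hmean)
    exact this
  have hae2 : ∀ᵐ ω ∂P, ∀ m : ℕ, ∃ k, 1 ≤ k ∧ 0 ≤ ∑ i ∈ Finset.range k, X (m + i) ω := by
    rw [ae_all_iff]
    intro m
    rw [ae_iff]
    have hset : {ω | ¬ ∃ k, 1 ≤ k ∧ 0 ≤ ∑ i ∈ Finset.range k, X (m + i) ω}
        = {ω | ∀ k, 1 ≤ k → ∑ i ∈ Finset.range k, X (m + i) ω < 0} := by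
      ext ω
      simp only [Set.mem_setOf_eq, not_exists, not_and, not_le]
    rw [hset]
    exact hm m
  filter_upwards [hae2] with ω hω
  by_contra hfin
  rw [Set.not_infinite] at hfin
  have h0 : (0 : ℕ) ∈ {n : ℕ | 0 ≤ ∑ i ∈ Finset.range n, X i ω} := by
    simp
  obtain ⟨a, haR, hmax⟩ := Set.Finite.exists_maximalFor id _ hfin ⟨0, h0⟩
  obtain ⟨k, hk1, hk2⟩ := hω a
  have hmem : a + k ∈ {n : ℕ | 0 ≤ ∑ i ∈ Finset.range n, X i ω} := by
    have hsplit := Finset.sum_range_add (fun i => X i ω) a k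
    simp only [Set.mem_setOf_eq] at haR ⊢
    rw [hsplit]
    linarith
  have := hmax hmem (by simp : id a ≤ id (a + k))
  simp only [id_eq] at this
  omega

theorem pos_infinite (hmeas : ∀ n, Measurable (X n))
    (hindep : iIndepFun X P)
    (hident : ∀ n, IdentDistrib (X n) (X 0) P P)
    (hint : Integrable (X 0) P) (hmean : ∫ θ, X 0 θ ∂P = 0)
    (hpos : P {ω | 0 < X 0 ω} ≠ 0) :
    ∀ᵐ ω ∂P, {n : ℕ | 0 < ∑ i ∈ Finset.range n, X i ω}.Infinite := by
  classical
  set p : ℝ := (P {ω | 0 < X 0 ω}).toReal with hpdef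
  have hp0 : 0 < p := ENNReal.toReal_pos hpos (measure_ne_top _ _)
  set ℱ := Filtration.natural X (fun i => (hmeas i).stronglyMeasurable) with hFdef
  have hXF : ∀ n i, i ≤ n → Measurable[ℱ n] (X i) := by
    intro n i hi
    refine Measurable.of_comap_le ?_
    exact le_iSup₂ (f := fun j (_ : j ≤ n) =>
      MeasurableSpace.comap (X j) inferInstance) i hi
  have hSF : ∀ n, Measurable[ℱ n] (fun ω => ∑ i ∈ Finset.range (n + 1), X i ω) := fun n =>
    Finset.measurable_sum _ fun i hi => hXF n i (by
      simp only [Finset.mem_range] at hi; omega)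
  set s : ℕ → Set Ω := fun n => {ω | 0 < ∑ i ∈ Finset.range (n + 1), X i ω} with hsdef
  have hsmeas : ∀ n, MeasurableSet[ℱ n] (s n) := fun n =>
    measurableSet_lt measurable_const (hSF n)
  have hBC := MeasureTheory.ae_mem_limsup_atTop_iff (μ := P) hsmeas
  have hAF : ∀ k, MeasurableSet[ℱ k] {ω | 0 ≤ ∑ i ∈ Finset.range (k + 1), X i ω} := fun k =>
    measurableSet_le measurable_const (hSF k)
  have hAm : ∀ k, MeasurableSet {ω | 0 ≤ ∑ i ∈ Finset.range (k + 1), X i ω} := fun k =>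
    measurableSet_le measurable_const (Finset.measurable_sum _ fun i _ => hmeas i)
  have hcond : ∀ k, ∀ᵐ ω ∂P,
      ({ω | 0 ≤ ∑ i ∈ Finset.range (k + 1), X i ω}.indicator (1 : Ω → ℝ) ω) * p
        ≤ (P[(s (k + 1)).indicator (1 : Ω → ℝ)|ℱ k]) ω := by
    intro k
    set A := {ω | 0 ≤ ∑ i ∈ Finset.range (k + 1), X i ω} with hAdef
    set B := X (k + 1) ⁻¹' Set.Ioi (0 : ℝ) with hBdef
    have hBm : MeasurableSet B := (hmeas (k + 1)) measurableSet_Ioi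
    have hsub : A ∩ B ⊆ s (k + 1) := by
      rintro ω ⟨h1, h2⟩
      have h1' : 0 ≤ ∑ i ∈ Finset.range (k + 1), X i ω := h1
      have h2' : (0 : ℝ) < X (k + 1) ω := h2
      have hss := Finset.sum_range_succ (fun i => X i ω) (k + 1)
      show 0 < ∑ i ∈ Finset.range (k + 1 + 1), X i ω
      rw [hss]
      linarith
    have hprodind : (A ∩ B).indicator (1 : Ω → ℝ)
        = (A.indicator (1 : Ω → ℝ)) * (B.indicator (1 : Ω → ℝ)) := by
      funext ω
      by_cases h1 : ω ∈ A <;> by_cases h2 : ω ∈ B <;>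
        simp [Set.indicator_of_mem, Set.indicator_of_notMem, h1, h2, Set.mem_inter_iff]
    have hintAB : Integrable (A.indicator (1 : Ω → ℝ) * B.indicator (1 : Ω → ℝ)) P := by
      rw [← hprodind]
      exact (integrable_const (1 : ℝ)).indicator ((hAm k).inter hBm)
    have hpull := condExp_mul_of_stronglyMeasurable_left (μ := P) (m := ℱ k)
      (stronglyMeasurable_const.indicator (hAF k)) hintAB
      ((integrable_const (1 : ℝ)).indicator hBm)
    have hindB : Indep (MeasurableSpace.comap (X (k + 1)) inferInstance) (ℱ k) P := by
      have hdisj2 : Disjoint ({k + 1} : Set ℕ) {j | j ≤ k} := by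
        refine Set.disjoint_left.mpr fun j h1 h2 => ?_
        simp only [Set.mem_singleton_iff] at h1
        simp only [Set.mem_setOf_eq] at h2
        omega
      have h := indep_iSup_of_disjoint (fun j => (hmeas j).comap_le) hindep.iIndep hdisj2
      have h' := indep_of_indep_of_le_left h
        (le_biSup (f := fun j => MeasurableSpace.comap (X j) inferInstance)
          (Set.mem_singleton (k + 1)))
      refine indep_of_indep_of_le_right h' ?_
      show (⨆ j, ⨆ (_ : j ≤ k), MeasurableSpace.comap (X j) inferInstance) ≤ _
      exact iSup₂_le fun j hj =>
        le_biSup (f := fun j => MeasurableSpace.comap (X j) inferInstance) hj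
    have hcondB : P[B.indicator (1 : Ω → ℝ)|ℱ k]
        =ᵐ[P] fun _ => ∫ ω, B.indicator (1 : Ω → ℝ) ω ∂P :=
      condExp_indep_eq (hmeas (k + 1)).comap_le (ℱ.le k)
        (stronglyMeasurable_const.indicator ⟨Set.Ioi 0, measurableSet_Ioi, rfl⟩) hindB
    have hval : ∫ ω, B.indicator (1 : Ω → ℝ) ω ∂P = p := by
      rw [integral_indicator_one hBm, hpdef]
      refine congrArg ENNReal.toReal ?_
      exact (hident (k + 1)).measure_mem_eq (measurableSet_Ioi (a := (0 : ℝ)))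
    have hmono := condExp_mono (μ := P) (m := ℱ k)
      ((integrable_const (1 : ℝ)).indicator ((hAm k).inter hBm))
      ((integrable_const (1 : ℝ)).indicator (ℱ.le (k + 1) _ (hsmeas (k + 1))))
      (Filter.Eventually.of_forall
        (Set.indicator_le_indicator_of_subset hsub (fun _ => zero_le_one)))
    filter_upwards [hpull, hcondB, hmono] with ω h1 h2 h3
    have e1 : (P[(A ∩ B).indicator (1 : Ω → ℝ)|ℱ k]) ω
        = A.indicator (1 : Ω → ℝ) ω * (P[B.indicator (1 : Ω → ℝ)|ℱ k]) ω := by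
      rw [hprodind]
      exact h1
    calc A.indicator (1 : Ω → ℝ) ω * p
        = A.indicator (1 : Ω → ℝ) ω * (P[B.indicator (1 : Ω → ℝ)|ℱ k]) ω := by
          rw [h2]; rw [hval]
      _ = (P[(A ∩ B).indicator (1 : Ω → ℝ)|ℱ k]) ω := e1.symm
      _ ≤ (P[(s (k + 1)).indicator (1 : Ω → ℝ)|ℱ k]) ω := h3
  have hnn : ∀ k, ∀ᵐ ω ∂P, 0 ≤ (P[(s (k + 1)).indicator (1 : Ω → ℝ)|ℱ k]) ω := fun k =>
    condExp_nonneg (Filter.Eventually.of_forall fun ω =>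
      Set.indicator_nonneg (fun _ _ => zero_le_one) ω)
  filter_upwards [nonneg_infinite hmeas hindep hident hint hmean, hBC,
    ae_all_iff.2 hcond, ae_all_iff.2 hnn] with ω hRinf hiff hbd hnn'
  -- count lemma
  set R' := {k : ℕ | 0 ≤ ∑ i ∈ Finset.range (k + 1), X i ω} with hR'def
  have hR'inf : R'.Infinite := by
    intro hfin
    have hsubR : {n : ℕ | 0 ≤ ∑ i ∈ Finset.range n, X i ω}
        ⊆ insert 0 ((fun k => k + 1) '' R') := by
      intro n hn
      match n with
      | 0 => exact Set.mem_insert _ _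
      | m + 1 => exact Set.mem_insert_of_mem _ ⟨m, hn, rfl⟩
    exact hRinf (((hfin.image _).insert 0).subset hsubR)
  have hcount : Tendsto (fun n =>
      (((Finset.range n).filter (fun k => k ∈ R')).card : ℝ)) atTop atTop := by
    have hnat : Tendsto (fun n => ((Finset.range n).filter (fun k => k ∈ R')).card)
        atTop atTop := by
      refine tendsto_atTop_atTop.2 fun b => ?_
      obtain ⟨S', hS'sub, hS'card⟩ := hR'inf.exists_subset_card_eq b
      refine ⟨S'.sup id + 1, fun n hn => ?_⟩
      rw [← hS'card]
      refine Finset.card_le_card fun k hk => ?_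
      rw [Finset.mem_filter, Finset.mem_range]
      constructor
      · have : k ≤ S'.sup id := Finset.le_sup (f := id) hk
        omega
      · exact hS'sub hk
    exact tendsto_natCast_atTop_atTop.comp hnat
  have hlb : ∀ n, p * (((Finset.range n).filter (fun k => k ∈ R')).card : ℝ)
      ≤ ∑ k ∈ Finset.range n, (P[(s (k + 1)).indicator (1 : Ω → ℝ)|ℱ k]) ω := by
    intro n
    have h1 : ∀ k ∈ Finset.range n,
        ({ω' | 0 ≤ ∑ i ∈ Finset.range (k + 1), X i ω'}.indicator (1 : Ω → ℝ) ω) * p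
          ≤ (P[(s (k + 1)).indicator (1 : Ω → ℝ)|ℱ k]) ω := fun k _ => hbd k
    calc p * (((Finset.range n).filter (fun k => k ∈ R')).card : ℝ)
        = ∑ k ∈ Finset.range n,
            ({ω' | 0 ≤ ∑ i ∈ Finset.range (k + 1), X i ω'}.indicator (1 : Ω → ℝ) ω) * p := by
          rw [← Finset.sum_mul]
          rw [mul_comm]
          congr 1
          rw [Finset.card_filter]
          push_cast
          refine Finset.sum_congr rfl fun k _ => ?_
          by_cases hk : 0 ≤ ∑ i ∈ Finset.range (k + 1), X i ω
          · rw [Set.indicator_of_mem (show ω ∈ _ from hk)]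
            simp [hR'def, Set.mem_setOf_eq, hk]
          · rw [Set.indicator_of_notMem (show ω ∉ _ from hk)]
            simp [hR'def, Set.mem_setOf_eq, hk]
      _ ≤ ∑ k ∈ Finset.range n, (P[(s (k + 1)).indicator (1 : Ω → ℝ)|ℱ k]) ω :=
          Finset.sum_le_sum h1
  have htend2 : Tendsto (fun n =>
      ∑ k ∈ Finset.range n, (P[(s (k + 1)).indicator (1 : Ω → ℝ)|ℱ k]) ω) atTop atTop := by
    refine tendsto_atTop_mono hlb ?_
    exact Tendsto.const_mul_atTop hp0 hcount
  have hmem : ω ∈ limsup s atTop := hiff.2 htend2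
  rw [Filter.mem_limsup_iff_frequently_mem] at hmem
  have hinf2 : {k : ℕ | ω ∈ s k}.Infinite := Nat.frequently_atTop_iff_infinite.1 hmem
  have hfinal : (fun k => k + 1) '' {k : ℕ | ω ∈ s k}
      ⊆ {n : ℕ | 0 < ∑ i ∈ Finset.range n, X i ω} := by
    rintro n ⟨k, hk, rfl⟩
    exact hk
  exact ((hinf2.image (fun a b h => by omega)).mono hfinal)

lemma pos_prob_of_nondeg (hmeas : ∀ n, Measurable (X n)) (hint : Integrable (X 0) P)
    (hmean : ∫ θ, X 0 θ ∂P = 0) (hnondeg : ∀ c : ℝ, P.map (X 0) ≠ Measure.dirac c) :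
    P {ω | 0 < X 0 ω} ≠ 0 := by
  intro h0
  have hle : ∀ᵐ ω ∂P, X 0 ω ≤ 0 := by
    rw [ae_iff]
    have hset : {ω | ¬ X 0 ω ≤ 0} = {ω | 0 < X 0 ω} := by ext ω; simp
    rw [hset]
    exact h0
  have hneg : 0 ≤ᵐ[P] fun ω => -X 0 ω := by
    filter_upwards [hle] with ω h
    simp only [Pi.zero_apply]
    linarith
  have hi : ∫ ω, -X 0 ω ∂P = 0 := by rw [integral_neg, hmean, neg_zero]
  have hz := (integral_eq_zero_iff_of_nonneg_ae hneg hint.neg).1 hi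
  have hzero : X 0 =ᵐ[P] fun _ => 0 := by
    filter_upwards [hz] with ω h
    have h' : -X 0 ω = 0 := h
    linarith
  have hmap : P.map (X 0) = Measure.dirac 0 := by
    rw [Measure.map_congr hzero]
    simp [Measure.map_const]
  exact hnondeg 0 hmap

end StmtAux

open StmtAux in
/-- If `X 0, X 1, …` are i.i.d. non-degenerate integrable real random variables with mean 0
and `S n = X 0 + ⋯ + X (n-1)`, then almost surely `S n > 0` infinitely often and
`S n < 0` infinitely often. -/
theorem stmt_3 {Ω : Type*} [MeasurableSpace Ω] (P : Measure Ω) [IsProbabilityMeasure P]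
    (X : ℕ → Ω → ℝ) (hmeas : ∀ n, Measurable (X n))
    (hindep : iIndepFun X P)
    (hident : ∀ n, IdentDistrib (X n) (X 0) P P)
    (hint : Integrable (X 0) P) (hmean : ∫ θ, X 0 θ ∂P = 0)
    (hnondeg : ∀ c : ℝ, P.map (X 0) ≠ Measure.dirac c) :
    ∀ᵐ θ ∂P,
      {n : ℕ | 0 < ∑ i ∈ Finset.range n, X i θ}.Infinite ∧
      {n : ℕ | ∑ i ∈ Finset.range n, X i θ < 0}.Infinite := by
  have hpos := pos_prob_of_nondeg (P := P) (X := X) hmeas hint hmean hnondeg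
  have h1 := pos_infinite hmeas hindep hident hint hmean hpos
  set Y : ℕ → Ω → ℝ := fun n => -(X n) with hY
  have hmeasY : ∀ n, Measurable (Y n) := fun n => (hmeas n).neg
  have hindepY : iIndepFun Y P :=
    hindep.comp (fun _ => fun x : ℝ => -x) (fun _ => measurable_neg)
  have hidentY : ∀ n, IdentDistrib (Y n) (Y 0) P P := fun n => (hident n).comp measurable_neg
  have hintY : Integrable (Y 0) P := hint.neg
  have hmeanY : ∫ θ, Y 0 θ ∂P = 0 := by
    show ∫ θ, -(X 0 θ) ∂P = 0
    rw [integral_neg, hmean, neg_zero]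
  have hnondegY : ∀ c : ℝ, P.map (Y 0) ≠ Measure.dirac c := by
    intro c hc
    have hXY : X 0 = (fun x : ℝ => -x) ∘ (Y 0) := by
      funext ω
      simp [hY]
    have : P.map (X 0) = Measure.dirac (-c) := by
      rw [hXY, ← Measure.map_map measurable_neg (hmeasY 0), hc,
        Measure.map_dirac' measurable_neg]
    exact hnondeg (-c) this
  have hposY := pos_prob_of_nondeg (P := P) (X := Y) hmeasY hintY hmeanY hnondegY
  have h2 := pos_infinite hmeasY hindepY hidentY hintY hmeanY hposY
  filter_upwards [h1, h2] with θ hθ1 hθ2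
  refine ⟨hθ1, ?_⟩
  have hset : {n : ℕ | ∑ i ∈ Finset.range n, X i θ < 0}
      = {n : ℕ | 0 < ∑ i ∈ Finset.range n, Y i θ} := by
    ext n
    have hsum : ∑ i ∈ Finset.range n, Y i θ = -∑ i ∈ Finset.range n, X i θ := by
      rw [hY, ← Finset.sum_neg_distrib]
      rfl
    simp only [Set.mem_setOf_eq, hsum]
    constructor
    · intro h; linarith
    · intro h; linarith
  rw [hset]
  exact hθ2
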